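/- Let A and B be entrywise nonnegative m×n real matrices. Then τ₊(A + B) ≤ τ₊(A) + τ₊(B). -/

import Mathlib

open Matrix

/-- The set of atoms `𝒜₊(A)`: rank-at-most-one matrices `R` with `0 ≤ R ≤ A` entrywise. -/
noncomputable def Aplus {m n : Type*} [Fintype m] [Fintype n]
    (A : Matrix m n ℝ) : Set (Matrix m n ℝ) :=
  {R | R.rank ≤ 1 ∧ ∀ i j, 0 ≤ R i j ∧ R i j ≤ A i j}

/-- `τ₊(A)`: supremum of `L(A)` over linear functionals `L` with `L ≤ 1` on `𝒜₊(A)`. -/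
noncomputable def tauPlus {m n : Type*} [Fintype m] [Fintype n]
    (A : Matrix m n ℝ) : ℝ :=
  sSup {x | ∃ L : Matrix m n ℝ →ₗ[ℝ] ℝ, (∀ R ∈ Aplus A, L R ≤ 1) ∧ L A = x}

lemma stdBasisMatrix_mem_Aplus {m n : ℕ} (A : Matrix (Fin m) (Fin n) ℝ)
    (hA : ∀ i j, 0 ≤ A i j) (i : Fin m) (j : Fin n) :
    Matrix.single i j (A i j) ∈ Aplus A := by
  constructor
  · have h : Matrix.single i j (A i j)
        = vecMulVec (Pi.single i (A i j)) (Pi.single j (1:ℝ)) := by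
      ext a b
      simp [Matrix.single, Matrix.vecMulVec_apply, Pi.single_apply]
      aesop
    rw [h, vecMulVec_eq (Fin 1)]
    exact le_trans (Matrix.rank_mul_le_left _ _)
      (le_trans (Matrix.rank_le_card_width _) (by simp))
  · intro a b
    by_cases hab : i = a ∧ j = b
    · obtain ⟨rfl, rfl⟩ := hab
      simpa using hA i j
    · rw [Matrix.single]
      simp only [Matrix.of_apply, if_neg hab]
      exact ⟨le_refl 0, hA a b⟩

lemma tauPlus_bddAbove {m n : ℕ} (A : Matrix (Fin m) (Fin n) ℝ)
    (hA : ∀ i j, 0 ≤ A i j) :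
    ∀ x ∈ {x | ∃ L : Matrix (Fin m) (Fin n) ℝ →ₗ[ℝ] ℝ,
        (∀ R ∈ Aplus A, L R ≤ 1) ∧ L A = x}, x ≤ (m : ℝ) * n := by
  rintro x ⟨L, hL, rfl⟩
  have hsum : A = ∑ i : Fin m, ∑ j : Fin n, Matrix.single i j (A i j) :=
    matrix_eq_sum_single A
  calc L A = ∑ i : Fin m, ∑ j : Fin n, L (Matrix.single i j (A i j)) := by
        conv_lhs => rw [hsum]
        simp [map_sum]
    _ ≤ ∑ i : Fin m, ∑ j : Fin n, (1 : ℝ) := by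
        refine Finset.sum_le_sum fun i _ => Finset.sum_le_sum fun j _ => ?_
        exact hL _ (stdBasisMatrix_mem_Aplus A hA i j)
    _ = (m : ℝ) * n := by simp [mul_comm]

lemma tauPlus_nonneg {m n : ℕ} (A : Matrix (Fin m) (Fin n) ℝ)
    (hA : ∀ i j, 0 ≤ A i j) : 0 ≤ tauPlus A := by
  exact le_csSup ⟨(m : ℝ) * n, fun x hx => tauPlus_bddAbove A hA x hx⟩
    ⟨0, fun R _ => by simp, by simp⟩

/-- subadditivity of `τ₊`: `τ₊(A + B) ≤ τ₊(A) + τ₊(B)`. -/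
theorem stmt6 {m n : ℕ} (A B : Matrix (Fin m) (Fin n) ℝ)
    (hA : ∀ i j, 0 ≤ A i j) (hB : ∀ i j, 0 ≤ B i j) :
    tauPlus (A + B) ≤ tauPlus A + tauPlus B := by
  apply Real.sSup_le
  · rintro x ⟨L, hL, rfl⟩
    -- L is admissible for A and for B
    have hLA : ∀ R ∈ Aplus A, L R ≤ 1 := by
      rintro R ⟨hr, hentry⟩
      exact hL R ⟨hr, fun i j => ⟨(hentry i j).1,
        le_trans (hentry i j).2 (by simp [Matrix.add_apply, hB i j])⟩⟩
    have hLB : ∀ R ∈ Aplus B, L R ≤ 1 := by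
      rintro R ⟨hr, hentry⟩
      exact hL R ⟨hr, fun i j => ⟨(hentry i j).1,
        le_trans (hentry i j).2 (by simp [Matrix.add_apply, hA i j])⟩⟩
    have h1 : L A ≤ tauPlus A :=
      le_csSup ⟨(m : ℝ) * n, fun x hx => tauPlus_bddAbove A hA x hx⟩ ⟨L, hLA, rfl⟩
    have h2 : L B ≤ tauPlus B :=
      le_csSup ⟨(m : ℝ) * n, fun x hx => tauPlus_bddAbove B hB x hx⟩ ⟨L, hLB, rfl⟩
    calc L (A + B) = L A + L B := by rw [map_add]
      _ ≤ tauPlus A + tauPlus B := add_le_add h1 h2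
  · exact add_nonneg (tauPlus_nonneg A hA) (tauPlus_nonneg B hB)
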